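/- The function ψ is twice differentiable on (0,1) and satisfies ψ''(ξ) + ψ'(ξ)/ξ = exp(ψ(ξ))/λ² for all ξ ∈ (0,1), together with the boundary condition lim_{ξ→1⁻} ψ'(ξ) = β. In other words, the explicit formula ψ(ξ) = 2·log(cosech(arcoth((β+2)/2) − log ξ)) − log(ξ²/(2λ²)) is an exact solution of the large-β approximation (1/ξ)·(ξψ')' = exp(ψ)/λ² of the Poisson–Boltzmann equation with wall boundary flux β. -/

import Mathlib

open Real Set Filter

/-- The paper's large-β approximate profile
`ψ(ξ) = 2 log(cosech(arcoth((β+2)/2) - log ξ)) - log(ξ²/(2λ²))`,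
written with `a = (1/2)·log((β+4)/β) = arcoth((β+2)/2)`. -/
noncomputable def psiL (lam β ξ : ℝ) : ℝ :=
  -2 * Real.log (Real.sinh ((1/2) * Real.log ((β + 4) / β) - Real.log ξ)) +
    Real.log (2 * lam ^ 2) - 2 * Real.log ξ

/-- The explicit profile `ψ` is twice differentiable on `(0,1)`, satisfies
`ψ'' + ψ'/ξ = e^ψ/λ²` there, and `ψ'(ξ) → β` as `ξ → 1⁻`: it solves the
large-β approximation of the Poisson–Boltzmann equation with wall flux `β`. -/
theorem stmt_1 (lam β : ℝ) (hlam : 0 < lam) (hβ : 0 < β) :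
    (∀ ξ ∈ Set.Ioo (0:ℝ) 1,
        DifferentiableAt ℝ (psiL lam β) ξ ∧
        DifferentiableAt ℝ (deriv (psiL lam β)) ξ) ∧
    (∀ ξ ∈ Set.Ioo (0:ℝ) 1,
        deriv (deriv (psiL lam β)) ξ + deriv (psiL lam β) ξ / ξ =
          Real.exp (psiL lam β ξ) / lam ^ 2) ∧
    Tendsto (deriv (psiL lam β)) (nhdsWithin 1 (Set.Iio 1)) (nhds β) := by
  set a : ℝ := (1/2) * Real.log ((β + 4) / β) with ha_def
  have ha : 0 < a := by
    have h1 : (1:ℝ) < (β + 4) / β := (one_lt_div hβ).mpr (by linarith)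
    have := Real.log_pos h1
    positivity
  have hea : (1:ℝ) < Real.exp a := by
    have := Real.exp_lt_exp.mpr ha
    simpa using this
  set S : Set ℝ := Set.Ioo (0:ℝ) (Real.exp a) with hS_def
  have hSopen : IsOpen S := isOpen_Ioo
  set φ : ℝ → ℝ := fun x =>
    2 * Real.cosh (a - Real.log x) * (x * Real.sinh (a - Real.log x))⁻¹ - 2 * x⁻¹ with hφ_def
  -- basic facts on S
  have hsinh_pos : ∀ ξ ∈ S, 0 < Real.sinh (a - Real.log ξ) := by
    intro ξ hξ
    have h0 : 0 < ξ := hξ.1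
    have : Real.log ξ < a := (Real.log_lt_iff_lt_exp h0).mpr hξ.2
    exact Real.sinh_pos_iff.mpr (by linarith)
  -- first derivative
  have hpsi : ∀ ξ ∈ S, HasDerivAt (psiL lam β) (φ ξ) ξ := by
    intro ξ hξ
    have h0 : 0 < ξ := hξ.1
    have hs := hsinh_pos ξ hξ
    have hlog : HasDerivAt Real.log ξ⁻¹ ξ := Real.hasDerivAt_log h0.ne'
    have hu : HasDerivAt (fun x => a - Real.log x) (-ξ⁻¹) ξ := by
      have := (hasDerivAt_const ξ a).sub hlog
      simp only [zero_sub] at this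
      exact this
    have hsinh : HasDerivAt (fun x => Real.sinh (a - Real.log x))
        (Real.cosh (a - Real.log ξ) * (-ξ⁻¹)) ξ := (Real.hasDerivAt_sinh _).comp ξ hu
    have hlogsinh : HasDerivAt (fun x => Real.log (Real.sinh (a - Real.log x)))
        ((Real.sinh (a - Real.log ξ))⁻¹ * (Real.cosh (a - Real.log ξ) * (-ξ⁻¹))) ξ := by
      exact (Real.hasDerivAt_log hs.ne').comp ξ hsinh
    have h : HasDerivAt (psiL lam β)
        (-2 * ((Real.sinh (a - Real.log ξ))⁻¹ * (Real.cosh (a - Real.log ξ) * (-ξ⁻¹))) + 0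
          - 2 * ξ⁻¹) ξ := by
      exact ((hlogsinh.const_mul (-2)).add (hasDerivAt_const ξ (Real.log (2 * lam ^ 2)))).sub
        (hlog.const_mul 2)
    convert h using 1
    rw [hφ_def]
    field_simp
    ring
  -- second derivative
  set φ' : ℝ → ℝ := fun x =>
    2 * (x * Real.sinh (a - Real.log x) ^ 2)⁻¹ * x⁻¹
      - 2 * Real.cosh (a - Real.log x) * (x * Real.sinh (a - Real.log x))⁻¹ * x⁻¹
      + 2 * (x ^ 2)⁻¹ with hφ'_def
  have hphi : ∀ ξ ∈ S, HasDerivAt φ (φ' ξ) ξ := by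
    intro ξ hξ
    have h0 : 0 < ξ := hξ.1
    have hs := hsinh_pos ξ hξ
    have hlog : HasDerivAt Real.log ξ⁻¹ ξ := Real.hasDerivAt_log h0.ne'
    have hu : HasDerivAt (fun x => a - Real.log x) (-ξ⁻¹) ξ := by
      have := (hasDerivAt_const ξ a).sub hlog
      simp only [zero_sub] at this
      exact this
    have hsinh : HasDerivAt (fun x => Real.sinh (a - Real.log x))
        (Real.cosh (a - Real.log ξ) * (-ξ⁻¹)) ξ := (Real.hasDerivAt_sinh _).comp ξ hu
    have hcosh : HasDerivAt (fun x => Real.cosh (a - Real.log x))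
        (Real.sinh (a - Real.log ξ) * (-ξ⁻¹)) ξ := (Real.hasDerivAt_cosh _).comp ξ hu
    have hden : HasDerivAt (fun x => x * Real.sinh (a - Real.log x))
        (1 * Real.sinh (a - Real.log ξ) + ξ * (Real.cosh (a - Real.log ξ) * (-ξ⁻¹))) ξ :=
      (hasDerivAt_id ξ).mul hsinh
    have hden_ne : ξ * Real.sinh (a - Real.log ξ) ≠ 0 := by positivity
    have hinv : HasDerivAt (fun x => (x * Real.sinh (a - Real.log x))⁻¹)
        (-(1 * Real.sinh (a - Real.log ξ) + ξ * (Real.cosh (a - Real.log ξ) * (-ξ⁻¹))) /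
          (ξ * Real.sinh (a - Real.log ξ)) ^ 2) ξ := hden.inv hden_ne
    have hxinv : HasDerivAt (fun x : ℝ => x⁻¹) (-(ξ ^ 2)⁻¹) ξ := by
      simpa using hasDerivAt_inv h0.ne'
    have h : HasDerivAt φ
        ((2 * (Real.sinh (a - Real.log ξ) * (-ξ⁻¹)) * (ξ * Real.sinh (a - Real.log ξ))⁻¹
          + 2 * Real.cosh (a - Real.log ξ) *
            (-(1 * Real.sinh (a - Real.log ξ) + ξ * (Real.cosh (a - Real.log ξ) * (-ξ⁻¹))) /
              (ξ * Real.sinh (a - Real.log ξ)) ^ 2))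
          - 2 * (-(ξ ^ 2)⁻¹)) ξ := by
      exact ((hcosh.const_mul 2).mul hinv).sub (hxinv.const_mul 2)
    convert h using 1
    rw [hφ'_def]
    have h1 : Real.cosh (a - Real.log ξ) ^ 2 = Real.sinh (a - Real.log ξ) ^ 2 + 1 :=
      Real.cosh_sq _
    set s := Real.sinh (a - Real.log ξ) with hs_def
    set c := Real.cosh (a - Real.log ξ) with hc_def
    have hsne : s ≠ 0 := ne_of_gt hs
    field_simp
    have h1' : Real.cosh (a - Real.log ξ) ^ 2 = Real.sinh (a - Real.log ξ) ^ 2 + 1 :=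
      Real.cosh_sq _
    rw [← hs_def, div_add_one (pow_ne_zero 2 hsne), div_mul_cancel₀ _ (pow_ne_zero 2 hsne)]
    linear_combination -h1
  -- deriv equalities
  have hderiv_eq : ∀ ξ ∈ S, deriv (psiL lam β) ξ = φ ξ := fun ξ hξ => (hpsi ξ hξ).deriv
  have hderiv2_eq : ∀ ξ ∈ S, deriv (deriv (psiL lam β)) ξ = φ' ξ := by
    intro ξ hξ
    have hev : deriv (psiL lam β) =ᶠ[nhds ξ] φ := by
      filter_upwards [hSopen.mem_nhds hξ] with x hx using hderiv_eq x hx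
    rw [Filter.EventuallyEq.deriv_eq hev]
    exact (hphi ξ hξ).deriv
  have hsub : Set.Ioo (0:ℝ) 1 ⊆ S := fun x hx => ⟨hx.1, lt_trans hx.2 hea⟩
  refine ⟨?_, ?_, ?_⟩
  · intro ξ hξ
    have hξS := hsub hξ
    refine ⟨(hpsi ξ hξS).differentiableAt, ?_⟩
    have hev : deriv (psiL lam β) =ᶠ[nhds ξ] φ := by
      filter_upwards [hSopen.mem_nhds hξS] with x hx using hderiv_eq x hx
    exact (hphi ξ hξS).differentiableAt.congr_of_eventuallyEq hev
  · intro ξ hξ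
    have hξS := hsub hξ
    have h0 : 0 < ξ := hξ.1
    have hs := hsinh_pos ξ hξS
    rw [hderiv_eq ξ hξS, hderiv2_eq ξ hξS]
    have hexp : Real.exp (psiL lam β ξ) =
        2 * lam ^ 2 * (ξ ^ 2 * Real.sinh (a - Real.log ξ) ^ 2)⁻¹ := by
      have e1 : Real.exp (-2 * Real.log (Real.sinh (a - Real.log ξ))) =
          (Real.sinh (a - Real.log ξ) ^ 2)⁻¹ := by
        rw [show -2 * Real.log (Real.sinh (a - Real.log ξ)) =
            -(Real.log (Real.sinh (a - Real.log ξ)) + Real.log (Real.sinh (a - Real.log ξ)))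
            by ring, Real.exp_neg, Real.exp_add, Real.exp_log hs, sq]
      have e2 : Real.exp (-(2 * Real.log ξ)) = (ξ ^ 2)⁻¹ := by
        rw [show -(2 * Real.log ξ) = -(Real.log ξ + Real.log ξ) by ring,
          Real.exp_neg, Real.exp_add, Real.exp_log h0, sq]
      rw [psiL, ← ha_def, sub_eq_add_neg, Real.exp_add, Real.exp_add, e1, e2,
        Real.exp_log (by positivity : (0:ℝ) < 2 * lam ^ 2)]
      rw [mul_inv]
      ring
    rw [hexp, hφ_def, hφ'_def]
    have h1 : Real.cosh (a - Real.log ξ) ^ 2 = Real.sinh (a - Real.log ξ) ^ 2 + 1 :=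
      Real.cosh_sq _
    field_simp
    ring
  · have h1S : (1:ℝ) ∈ S := ⟨one_pos, hea⟩
    have hsa : 0 < Real.sinh a := Real.sinh_pos_iff.mpr ha
    have hφ1 : φ 1 = β := by
      rw [hφ_def]
      simp only [Real.log_one, sub_zero, one_mul, inv_one, mul_one]
      have h2a : Real.exp a ^ 2 = (β + 4) / β := by
        rw [sq, ← Real.exp_add, ha_def, show (1/2) * Real.log ((β+4)/β) + (1/2) * Real.log ((β+4)/β)
          = Real.log ((β+4)/β) by ring]
        exact Real.exp_log (by positivity)
      rw [Real.cosh_eq, Real.sinh_eq, Real.exp_neg]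
      have hE : 0 < Real.exp a := Real.exp_pos a
      have hE1 : Real.exp a - (Real.exp a)⁻¹ ≠ 0 := by
        have : Real.sinh a = (Real.exp a - (Real.exp a)⁻¹) / 2 := by
          rw [Real.sinh_eq, Real.exp_neg]
        nlinarith [hsa]
      have hEE : Real.exp a * Real.exp a - 1 ≠ 0 := by nlinarith [hea]
      field_simp
      field_simp at h2a
      have hE2 : Real.exp a ^ 2 - 1 ≠ 0 := by nlinarith [hea]
      rw [div_sub_one hE2]
      field_simp
      linear_combination -h2a
    have hev : deriv (psiL lam β) =ᶠ[nhds (1:ℝ)] φ := by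
      filter_upwards [hSopen.mem_nhds h1S] with x hx using hderiv_eq x hx
    have hcont : ContinuousAt φ 1 := (hphi 1 h1S).differentiableAt.continuousAt
    have ht : Tendsto φ (nhdsWithin 1 (Set.Iio 1)) (nhds β) := by
      rw [← hφ1]
      exact (hcont.continuousWithinAt).tendsto
    exact ht.congr' (hev.filter_mono nhdsWithin_le_nhds).symm
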